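/- Assume each t_a is continuously differentiable, nondecreasing and convex on [0,∞). Then a link flow pair (f^{H*}, f^{A*}) ∈ K, with f* = f^{H*} + f^{A*}, satisfies the decentralized equilibrium variational inequality c^H(f*) · (f^H − f^{H*}) + c^A(f*) · (f^A − f^{A*}) ≥ 0 for all (f^H, f^A) ∈ K if and only if it satisfies the centralized equilibrium conditions: (i) c^H(f*) · (f^H − f^{H*}) ≥ 0 for all f^H ∈ K^H, and (ii) f^{A*} is a minimizer of S(f^{H*} + f^A) over f^A ∈ K^A. -/

import Mathlib

open scoped BigOperators

/-- Aggregated link flow `f = Δ x`. -/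
noncomputable def aggFlow {L P : Type*} [Fintype P] (Δ : L → P → ℝ) (x : P → ℝ) : L → ℝ :=
  fun a => ∑ p, Δ a p * x p

/-- Social cost `S(f) = Σ_a f_a t_a(f_a)`. -/
noncomputable def Scost {L : Type*} [Fintype L] (t : L → ℝ → ℝ) (f : L → ℝ) : ℝ :=
  ∑ a, f a * t a (f a)

/-- The set `K^H` of human link flows with demand `1 − α`. -/
def KH {L P : Type*} [Fintype P] (Δ : L → P → ℝ) (α : ℝ) : Set (L → ℝ) :=
  {f | ∃ x : P → ℝ, (∀ p, 0 ≤ x p) ∧ (∑ p, x p = 1 - α) ∧ f = aggFlow Δ x}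

/-- The set `K^A` of autonomous link flows with demand `α`. -/
def KA {L P : Type*} [Fintype P] (Δ : L → P → ℝ) (α : ℝ) : Set (L → ℝ) :=
  {f | ∃ x : P → ℝ, (∀ p, 0 ≤ x p) ∧ (∑ p, x p = α) ∧ f = aggFlow Δ x}

/-- Gradient inequality for a convex differentiable function on `[0, ∞)`. -/
lemma grad_ineq {f : ℝ → ℝ} (hfc : ConvexOn ℝ (Set.Ici (0:ℝ)) f)
    (hfd : ∀ x : ℝ, DifferentiableAt ℝ f x) {x y : ℝ} (hx : 0 ≤ x) (hy : 0 ≤ y) :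
    f x + deriv f x * (y - x) ≤ f y := by
  rcases lt_trichotomy x y with h | h | h
  · have h1 : deriv f x ≤ slope f x y := hfc.deriv_le_slope hx hy h (hfd x)
    rw [slope_def_field] at h1
    have h2 : deriv f x * (y - x) ≤ f y - f x := by
      have := (le_div_iff₀ (by linarith)).mp h1
      linarith
    linarith
  · subst h; simp
  · have h1 : slope f y x ≤ deriv f x := hfc.slope_le_deriv hy hx h (hfd x)
    rw [slope_def_field] at h1
    have h2 : f x - f y ≤ deriv f x * (x - y) := by
      have := (div_le_iff₀ (by linarith)).mp h1
      linarith
    have h3 : deriv f x * (y - x) = -(deriv f x * (x - y)) := by ring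
    linarith

/-- Theorem 6 (centralized = decentralized): with continuously differentiable,
nondecreasing, convex travel times, a link flow pair `(f^{H*}, f^{A*}) ∈ K`
satisfies the decentralized equilibrium variational inequality if and only if it
satisfies the centralized equilibrium conditions: the human Wardrop VI together
with `f^{A*}` minimizing the social cost `S(f^{H*} + ·)` over `K^A`. -/
theorem centralized_iff_decentralized {L P : Type*} [Fintype L] [Fintype P] [Nonempty P]
    (Δ : L → P → ℝ) (hΔ : ∀ a p, Δ a p = 0 ∨ Δ a p = 1)
    (t : L → ℝ → ℝ) (ht : ∀ a, ContDiff ℝ 1 (t a))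
    (htmono : ∀ a, MonotoneOn (t a) (Set.Ici (0:ℝ)))
    (htconv : ∀ a, ConvexOn ℝ (Set.Ici (0:ℝ)) (t a))
    (α : ℝ) (hα : α ∈ Set.Icc (0:ℝ) 1)
    (fHs fAs : L → ℝ) (hfH : fHs ∈ KH Δ α) (hfA : fAs ∈ KA Δ α) :
    (∀ fH ∈ KH Δ α, ∀ fA ∈ KA Δ α,
        0 ≤ (∑ a, t a (fHs a + fAs a) * (fH a - fHs a)) +
            ∑ a, (t a (fHs a + fAs a) +
              (fHs a + fAs a) * deriv (t a) (fHs a + fAs a)) * (fA a - fAs a)) ↔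
    ((∀ fH ∈ KH Δ α, 0 ≤ ∑ a, t a (fHs a + fAs a) * (fH a - fHs a)) ∧
      (∀ fA ∈ KA Δ α,
        Scost t (fun a => fHs a + fAs a) ≤ Scost t (fun a => fHs a + fA a))) := by
  classical
  -- nonnegativity of aggregated flows
  have hflow : ∀ (x : P → ℝ), (∀ p, 0 ≤ x p) → ∀ a, 0 ≤ aggFlow Δ x a := by
    intro x hx a
    refine Finset.sum_nonneg fun p _ => ?_
    rcases hΔ a p with h | h <;> simp [h, hx p]
  have hKHnn : ∀ f ∈ KH Δ α, ∀ a, 0 ≤ f a := by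
    rintro f ⟨x, hx0, -, rfl⟩ a; exact hflow x hx0 a
  have hKAnn : ∀ f ∈ KA Δ α, ∀ a, 0 ≤ f a := by
    rintro f ⟨x, hx0, -, rfl⟩ a; exact hflow x hx0 a
  have hfHs0 : ∀ a, 0 ≤ fHs a := hKHnn fHs hfH
  have hfAs0 : ∀ a, 0 ≤ fAs a := hKAnn fAs hfA
  have hfs0 : ∀ a, 0 ≤ fHs a + fAs a := fun a => add_nonneg (hfHs0 a) (hfAs0 a)
  -- differentiability of t and of g a = fun x => x * t a x
  have htd : ∀ a, Differentiable ℝ (t a) := fun a => (ht a).differentiable one_ne_zero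
  set g : L → ℝ → ℝ := fun a x => x * t a x with hgdef
  have hgd : ∀ a x, HasDerivAt (g a) (t a x + x * deriv (t a) x) x := by
    intro a x
    have h1 := (hasDerivAt_id x).mul ((htd a x).hasDerivAt)
    simpa [hgdef, add_comm, Pi.mul_def] using h1
  have hgdiff : ∀ a, ∀ x : ℝ, DifferentiableAt ℝ (g a) x :=
    fun a x => (hgd a x).differentiableAt
  have hgderiv : ∀ a x, deriv (g a) x = t a x + x * deriv (t a) x :=
    fun a x => (hgd a x).deriv
  -- nonnegativity & monotonicity of deriv t on the positive axis
  have htd_nonneg : ∀ a, ∀ x : ℝ, 0 < x → 0 ≤ deriv (t a) x := by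
    intro a x hx
    have h1 : slope (t a) 0 x ≤ deriv (t a) x :=
      (htconv a).slope_le_deriv (Set.mem_Ici.2 le_rfl) (Set.mem_Ici.2 hx.le) hx (htd a x)
    have h2 : 0 ≤ slope (t a) 0 x := by
      rw [slope_def_field]
      apply div_nonneg
      · have := htmono a (Set.mem_Ici.2 le_rfl) (Set.mem_Ici.2 hx.le) hx.le
        linarith
      · linarith
    linarith
  have htd_mono : ∀ a, MonotoneOn (deriv (t a)) (Set.Ici 0) :=
    fun a => (htconv a).monotoneOn_deriv (fun x _ => htd a x)
  -- convexity of g a on [0, ∞)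
  have hgconv : ∀ a, ConvexOn ℝ (Set.Ici (0:ℝ)) (g a) := by
    intro a
    apply MonotoneOn.convexOn_of_deriv (convex_Ici 0)
    · exact ((continuous_id.mul ((ht a).continuous)).continuousOn)
    · exact fun x _ => (hgdiff a x).differentiableWithinAt
    · rw [interior_Ici]
      intro x hx y hy hxy
      rw [hgderiv, hgderiv]
      have hx' : (0:ℝ) < x := hx
      have hy' : (0:ℝ) < y := hy
      have h1 : t a x ≤ t a y := htmono a hx'.le hy'.le hxy
      have h2 : deriv (t a) x ≤ deriv (t a) y := htd_mono a hx'.le hy'.le hxy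
      have h3 : 0 ≤ deriv (t a) x := htd_nonneg a x hx'
      have h4 : x * deriv (t a) x ≤ y * deriv (t a) y := mul_le_mul hxy h2 h3 hy'.le
      linarith
  -- gradient inequality for g
  have hgrad : ∀ a {x y : ℝ}, 0 ≤ x → 0 ≤ y →
      g a x + (t a x + x * deriv (t a) x) * (y - x) ≤ g a y := by
    intro a x y hx hy
    have := grad_ineq (hgconv a) (hgdiff a) hx hy
    rwa [hgderiv] at this
  -- Scost as a sum of g
  have hScost : ∀ f : L → ℝ, Scost t f = ∑ a, g a (f a) := fun f => rfl
  constructor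
  · -- decentralized ⇒ centralized
    intro hVI
    constructor
    · intro fH hfHmem
      have := hVI fH hfHmem fAs hfA
      simpa using this
    · intro fA hfAmem
      have h1 := hVI fHs hfH fA hfAmem
      simp only [sub_self, mul_zero, Finset.sum_const_zero, zero_add] at h1
      have h2 : ∀ a ∈ Finset.univ,
          g a (fHs a + fAs a) + (t a (fHs a + fAs a) +
            (fHs a + fAs a) * deriv (t a) (fHs a + fAs a)) * (fA a - fAs a)
            ≤ g a (fHs a + fA a) := by
        intro a _
        have := hgrad a (hfs0 a) (add_nonneg (hfHs0 a) (hKAnn fA hfAmem a))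
        simpa [show fHs a + fA a - (fHs a + fAs a) = fA a - fAs a by ring] using this
      have h3 := Finset.sum_le_sum h2
      rw [Finset.sum_add_distrib] at h3
      rw [hScost, hScost]
      linarith
  · -- centralized ⇒ decentralized
    rintro ⟨hW, hmin⟩ fH hfHmem fA hfAmem
    have hA : 0 ≤ ∑ a, t a (fHs a + fAs a) * (fH a - fHs a) := hW fH hfHmem
    -- the first-order condition coming from minimality
    have hB : 0 ≤ ∑ a, (t a (fHs a + fAs a) +
        (fHs a + fAs a) * deriv (t a) (fHs a + fAs a)) * (fA a - fAs a) := by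
      obtain ⟨xA, hxA0, hxAsum, hfAseq⟩ := hfA
      obtain ⟨yA, hyA0, hyAsum, hfAeq⟩ := hfAmem
      set d : L → ℝ := fun a => fA a - fAs a with hddef
      set h : ℝ → ℝ := fun ε => ∑ a, g a (fHs a + fAs a + ε * d a) with hhdef
      have hder : HasDerivAt h
          (∑ a, (t a (fHs a + fAs a) + (fHs a + fAs a) * deriv (t a) (fHs a + fAs a)) * d a)
          0 := by
        apply HasDerivAt.fun_sum
        intro a _
        have hinner : HasDerivAt (fun ε : ℝ => fHs a + fAs a + ε * d a) (d a) 0 := by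
          simpa using (hasDerivAt_id (0:ℝ)).mul_const (d a) |>.const_add (fHs a + fAs a)
        have houter := hgd a (fHs a + fAs a + 0 * d a)
        have := HasDerivAt.comp (0:ℝ) (by simpa using houter) hinner
        simpa [Function.comp_def] using this
      -- h ε ≥ h 0 for ε ∈ (0,1)
      have hmem : ∀ ε ∈ Set.Icc (0:ℝ) 1, (fun a => fAs a + ε * d a) ∈ KA Δ α := by
        intro ε hε
        refine ⟨fun p => (1 - ε) * xA p + ε * yA p, ?_, ?_, ?_⟩
        · intro p
          have h1 : 0 ≤ (1 - ε) * xA p := mul_nonneg (by linarith [hε.2]) (hxA0 p)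
          have h2 : 0 ≤ ε * yA p := mul_nonneg hε.1 (hyA0 p)
          show 0 ≤ (1 - ε) * xA p + ε * yA p
          linarith
        · rw [Finset.sum_add_distrib, ← Finset.mul_sum, ← Finset.mul_sum, hxAsum, hyAsum]
          ring
        · funext a
          have h1 : aggFlow Δ (fun p => (1 - ε) * xA p + ε * yA p) a
              = (1 - ε) * aggFlow Δ xA a + ε * aggFlow Δ yA a := by
            simp only [aggFlow, Finset.mul_sum, ← Finset.sum_add_distrib]
            exact Finset.sum_congr rfl fun p _ => by ring
          rw [h1, ← hfAseq, ← hfAeq]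
          simp only [hddef]
          ring
      have hge : ∀ ε ∈ Set.Ioo (0:ℝ) 1, h 0 ≤ h ε := by
        intro ε hε
        have e0 : h 0 = Scost t (fun a => fHs a + fAs a) := by
          simp [hhdef, Scost, hgdef]
        have e1 : h ε = Scost t (fun a => fHs a + (fAs a + ε * d a)) := by
          simp [hhdef, Scost, hgdef, add_assoc]
        rw [e0, e1]
        exact hmin _ (hmem ε ⟨hε.1.le, hε.2.le⟩)
      have htend : Filter.Tendsto (slope h 0) (nhdsWithin 0 (Set.Ioi 0))
          (nhds (∑ a, (t a (fHs a + fAs a) +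
            (fHs a + fAs a) * deriv (t a) (fHs a + fAs a)) * d a)) :=
        (hasDerivAt_iff_tendsto_slope.mp hder).mono_left
          (nhdsWithin_mono 0 (fun x hx => ne_of_gt hx))
      have hfin : 0 ≤ ∑ a, (t a (fHs a + fAs a) +
          (fHs a + fAs a) * deriv (t a) (fHs a + fAs a)) * d a := by
        refine ge_of_tendsto htend ?_
        filter_upwards [Ioo_mem_nhdsGT_of_mem (Set.mem_Ico.mpr ⟨le_refl (0:ℝ), one_pos⟩)]
          with ε hε
        have hε0 : (0:ℝ) < ε := hε.1
        have := hge ε hε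
        rw [slope_def_field]
        apply div_nonneg (by linarith) (by linarith)
      simpa [hddef] using hfin
    linarith
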